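/- The set G of 5×5 complex matrices g(t,p,q₁,q₂) with rows (t³, t²(p+conj(p)), i·t²·conj(p), i·t·(2|p|²+conj(p)²), q₂), (0, t², 0, 2i·t·conj(p), q₁), (0, 0, t², 2tp, p²), (0, 0, 0, t, p), (0, 0, 0, 0, 1), where t ranges over the nonzero reals and (p,q₁,q₂) ranges over C, is a subgroup of the invertible 5×5 complex matrices: it contains the identity, is closed under matrix multiplication, and each of its elements is invertible with inverse again in G. -/

import Mathlib

open Complex

/-- The cubic model `C = {(z,w₁,w₂) ∈ ℂ³ : Im w₁ = |z|², Im w₂ = (Re z)·|z|²}`. -/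
def cubicC : Set (ℂ × ℂ × ℂ) :=
  {p | p.2.1.im = Complex.normSq p.1 ∧ p.2.2.im = p.1.re * Complex.normSq p.1}

/-- The matrix `g(t,p,q₁,q₂)` of the extended group `G`. -/
noncomputable def gmat (t : ℝ) (p q₁ q₂ : ℂ) : Matrix (Fin 5) (Fin 5) ℂ :=
  !![(t : ℂ) ^ 3, (t : ℂ) ^ 2 * (p + (starRingEnd ℂ) p), I * (t : ℂ) ^ 2 * (starRingEnd ℂ) p,
       I * (t : ℂ) * (2 * (Complex.normSq p : ℂ) + ((starRingEnd ℂ) p) ^ 2), q₂;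
     0, (t : ℂ) ^ 2, 0, 2 * I * (t : ℂ) * (starRingEnd ℂ) p, q₁;
     0, 0, (t : ℂ) ^ 2, 2 * (t : ℂ) * p, p ^ 2;
     0, 0, 0, (t : ℂ), p;
     0, 0, 0, 0, 1]

/-- The set `G` of matrices `g(t,p,q₁,q₂)` with `t ≠ 0` and `(p,q₁,q₂) ∈ C`. -/
noncomputable def Ggrp : Set (Matrix (Fin 5) (Fin 5) ℂ) :=
  {m | ∃ t : ℝ, t ≠ 0 ∧ ∃ p q₁ q₂ : ℂ, (p, q₁, q₂) ∈ cubicC ∧ m = gmat t p q₁ q₂}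

/-- First composed parameter. -/
noncomputable def mulP (t : ℝ) (p r : ℂ) : ℂ := (t : ℂ) * r + p

/-- Second composed parameter. -/
noncomputable def mulQ1 (t : ℝ) (p q₁ r r₁ : ℂ) : ℂ :=
  (t : ℂ) ^ 2 * r₁ + 2 * I * (t : ℂ) * (starRingEnd ℂ) p * r + q₁

/-- Third composed parameter. -/
noncomputable def mulQ2 (t : ℝ) (p q₂ r r₁ r₂ : ℂ) : ℂ :=
  (t : ℂ) ^ 3 * r₂ + (t : ℂ) ^ 2 * (p + (starRingEnd ℂ) p) * r₁ +
    I * (t : ℂ) ^ 2 * (starRingEnd ℂ) p * r ^ 2 +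
    I * (t : ℂ) * (2 * (Complex.normSq p : ℂ) + ((starRingEnd ℂ) p) ^ 2) * r + q₂

set_option maxHeartbeats 1000000 in
lemma gmat_mul (t s : ℝ) (p q₁ q₂ r r₁ r₂ : ℂ) :
    gmat t p q₁ q₂ * gmat s r r₁ r₂ =
      gmat (t * s) (mulP t p r) (mulQ1 t p q₁ r r₁) (mulQ2 t p q₂ r r₁ r₂) := by
  ext i j
  fin_cases i <;> fin_cases j <;>
    simp [gmat, mulP, mulQ1, mulQ2, Matrix.mul_apply, Fin.sum_univ_five,
      Matrix.vecHead, Matrix.vecTail, ← Complex.mul_conj, map_add, map_mul,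
      Complex.conj_ofReal, Complex.ofReal_mul] <;>
    ring

set_option maxHeartbeats 1000000 in
lemma gmat_one : gmat 1 0 0 0 = 1 := by
  ext i j
  fin_cases i <;> fin_cases j <;>
    simp [gmat, Matrix.one_apply, Matrix.vecHead, Matrix.vecTail]

lemma cubic_mul (t : ℝ) {p q₁ q₂ r r₁ r₂ : ℂ}
    (hp : (p, q₁, q₂) ∈ cubicC) (hr : (r, r₁, r₂) ∈ cubicC) :
    (mulP t p r, mulQ1 t p q₁ r r₁, mulQ2 t p q₂ r r₁ r₂) ∈ cubicC := by
  obtain ⟨h1, h2⟩ := hp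
  obtain ⟨h3, h4⟩ := hr
  simp only [cubicC, Set.mem_setOf_eq, Complex.normSq_apply] at h1 h2 h3 h4 ⊢
  constructor
  · simp only [mulP, mulQ1, Complex.add_im, Complex.mul_im, Complex.mul_re,
      Complex.add_re, Complex.I_re, Complex.I_im, Complex.ofReal_re, Complex.ofReal_im,
      Complex.conj_re, Complex.conj_im, Complex.normSq_apply, pow_succ, pow_zero, one_mul,
      Complex.re_ofNat, Complex.im_ofNat, Complex.one_re, Complex.one_im]
    linear_combination (t : ℝ) ^ 2 * h3 + h1
  · simp only [mulP, mulQ1, mulQ2, Complex.add_im, Complex.mul_im, Complex.mul_re,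
      Complex.add_re, Complex.I_re, Complex.I_im, Complex.ofReal_re, Complex.ofReal_im,
      Complex.conj_re, Complex.conj_im, Complex.normSq_apply, pow_succ, pow_zero, one_mul,
      Complex.re_ofNat, Complex.im_ofNat, Complex.one_re, Complex.one_im]
    linear_combination (t : ℝ) ^ 3 * h4 + 2 * (t : ℝ) ^ 2 * p.re * h3 + h2

theorem stmt_6 :
    (1 : Matrix (Fin 5) (Fin 5) ℂ) ∈ Ggrp ∧
    (∀ a ∈ Ggrp, ∀ b ∈ Ggrp, a * b ∈ Ggrp) ∧
    (∀ a ∈ Ggrp, ∃ b ∈ Ggrp, a * b = 1 ∧ b * a = 1) := by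
  refine ⟨⟨1, one_ne_zero, 0, 0, 0, ⟨by simp [cubicC], by simp [cubicC]⟩, gmat_one.symm⟩, ?_, ?_⟩
  · rintro a ⟨t, ht, p, q₁, q₂, hp, rfl⟩ b ⟨s, hs, r, r₁, r₂, hr, rfl⟩
    exact ⟨t * s, mul_ne_zero ht hs, mulP t p r, mulQ1 t p q₁ r r₁, mulQ2 t p q₂ r r₁ r₂,
      cubic_mul t hp hr, gmat_mul t s p q₁ q₂ r r₁ r₂⟩
  · rintro a ⟨t, ht, p, q₁, q₂, ⟨h1, h2⟩, rfl⟩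
    simp only [cubicC, Set.mem_setOf_eq, Complex.normSq_apply] at h1 h2
    have hs0 : t⁻¹ ≠ 0 := inv_ne_zero ht
    have htC : (t : ℂ) ≠ 0 := Complex.ofReal_ne_zero.mpr ht
    set rI : ℂ := -((t⁻¹ : ℝ) : ℂ) * p with hrI
    set r1I : ℂ := ((t⁻¹ : ℝ) : ℂ) ^ 2 * (-q₁ + 2 * I * (Complex.normSq p : ℂ)) with hr1I
    set r2I : ℂ := -((t⁻¹ : ℝ) : ℂ) ^ 3 *
      ((p + (starRingEnd ℂ) p) * (-q₁ + 2 * I * (Complex.normSq p : ℂ)) -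
        I * p * (Complex.normSq p : ℂ) - I * p * ((starRingEnd ℂ) p) ^ 2 + q₂) with hr2I
    have hmem : (rI, r1I, r2I) ∈ cubicC := by
      constructor
      · simp only [hrI, hr1I, Complex.add_im, Complex.mul_im, Complex.mul_re,
          Complex.add_re, Complex.neg_re, Complex.neg_im, Complex.I_re, Complex.I_im,
          Complex.ofReal_re, Complex.ofReal_im, Complex.normSq_apply, pow_succ, pow_zero,
          one_mul, Complex.re_ofNat, Complex.im_ofNat]
        linear_combination (-(t⁻¹ : ℝ) ^ 2) * h1
      · simp only [hrI, hr1I, hr2I, Complex.add_im, Complex.mul_im, Complex.mul_re,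
          Complex.add_re, Complex.sub_re, Complex.sub_im, Complex.neg_re, Complex.neg_im,
          Complex.I_re, Complex.I_im, Complex.ofReal_re, Complex.ofReal_im,
          Complex.conj_re, Complex.conj_im, Complex.normSq_apply, pow_succ, pow_zero,
          one_mul, Complex.re_ofNat, Complex.im_ofNat]
        linear_combination 2 * (t⁻¹ : ℝ) ^ 3 * p.re * h1 - (t⁻¹ : ℝ) ^ 3 * h2
    refine ⟨gmat t⁻¹ rI r1I r2I, ⟨t⁻¹, hs0, rI, r1I, r2I, hmem, rfl⟩, ?_, ?_⟩
    · rw [gmat_mul]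
      have hts : t * t⁻¹ = 1 := mul_inv_cancel₀ ht
      have hP : mulP t p rI = 0 := by
        simp only [mulP, hrI]; push_cast; field_simp; ring
      have hQ1 : mulQ1 t p q₁ rI r1I = 0 := by
        simp only [mulQ1, hrI, hr1I, ← Complex.mul_conj]
        push_cast
        field_simp
        ring
      have hQ2 : mulQ2 t p q₂ rI r1I r2I = 0 := by
        simp only [mulQ2, hrI, hr1I, hr2I, ← Complex.mul_conj]
        push_cast
        field_simp
        ring
      rw [hts, hP, hQ1, hQ2, gmat_one]
    · rw [gmat_mul]
      have hts : t⁻¹ * t = 1 := inv_mul_cancel₀ ht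
      have hP : mulP t⁻¹ rI p = 0 := by
        simp only [mulP, hrI]; push_cast; field_simp; ring
      have hQ1 : mulQ1 t⁻¹ rI r1I p q₁ = 0 := by
        simp only [mulQ1, hrI, hr1I, ← Complex.mul_conj, map_mul, map_neg,
          Complex.conj_ofReal]
        push_cast
        field_simp
        ring
      have hQ2 : mulQ2 t⁻¹ rI r2I p q₁ q₂ = 0 := by
        simp only [mulQ2, hrI, hr1I, hr2I, Complex.normSq_neg, Complex.normSq_mul,
          Complex.normSq_ofReal, Complex.ofReal_mul, ← Complex.mul_conj, map_mul, map_neg,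
          Complex.conj_ofReal]
        push_cast
        ring
      rw [hts, hP, hQ1, hQ2, gmat_one]
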